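/- For Lebesgue-almost every tuple of TT-cores G in the parameter space ℝ^D, provided there exists at least one tuple of TT-cores G₀ (with the same shapes and ranks) whose assembled matrix X(G₀) has rank min(I, J), the assembled matrix X(G) has full matrix rank: rank X(G) = min(I, J). -/

import Mathlib

open MeasureTheory BigOperators Finset

noncomputable section

/-- The space of tuples of TT-cores with dimensions `Idim`, `Jdim` and TT-ranks `R`
(identified with the Euclidean space `ℝ^D`, `D = ∑ k, R (k-1) * Idim k * Jdim k * R k`). -/
abbrev CoreSpace {N : ℕ} (Idim Jdim : Fin N → ℕ) (R : Fin (N + 1) → ℕ) : Type :=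
  ∀ k : Fin N, Fin (R k.castSucc) → Fin (Idim k) → Fin (Jdim k) → Fin (R k.succ) → ℝ

/-- The assembled `I × J` matrix of a tuple of TT-cores:
`X(G)(i,j) = ∑_{r_1,…,r_{N−1}} ∏_k G^(k)(r_{k−1}, i_k, j_k, r_k)` (the boundary rank indices
`r_0, r_N` range over the one-element sets `Fin (R 0)`, `Fin (R N)` when `R 0 = R N = 1`). -/
noncomputable def ttMatrix {N : ℕ} (Idim Jdim : Fin N → ℕ) (R : Fin (N + 1) → ℕ)
    (eI : Fin (∏ k, Idim k) ≃ (∀ k, Fin (Idim k)))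
    (eJ : Fin (∏ k, Jdim k) ≃ (∀ k, Fin (Jdim k)))
    (G : CoreSpace Idim Jdim R) :
    Matrix (Fin (∏ k, Idim k)) (Fin (∏ k, Jdim k)) ℝ :=
  Matrix.of fun i j =>
    ∑ r : ∀ k : Fin (N + 1), Fin (R k),
      ∏ k : Fin N, G k (r k.castSucc) (eI i k) (eJ j k) (r k.succ)

/-! ### Auxiliary results: zero sets of multivariate polynomials are null -/

lemma measurable_mv_eval {σ : Type*} (p : MvPolynomial σ ℝ) :
    Measurable fun x : σ → ℝ => MvPolynomial.eval x p := by
  induction p using MvPolynomial.induction_on with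
  | C a => simpa using measurable_const
  | add p q hp hq => simpa [Pi.add_def] using hp.add hq
  | mul_X p i hp => simpa [Pi.mul_def] using hp.mul (measurable_pi_apply i)

lemma ae_eval_ne_zero_fin : ∀ (n : ℕ) (p : MvPolynomial (Fin n) ℝ), p ≠ 0 →
    ∀ᵐ x : Fin n → ℝ, MvPolynomial.eval x p ≠ 0 := by
  intro n
  induction n with
  | zero =>
    intro p hp
    refine ae_of_all _ fun x => ?_
    obtain ⟨c, rfl⟩ := MvPolynomial.C_surjective (Fin 0) p
    have hc : c ≠ 0 := fun h => hp (by simp [h])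
    simpa using hc
  | succ n ih =>
    intro p hp
    set q := MvPolynomial.finSuccEquiv ℝ n p with hqdef
    have hq0 : q ≠ 0 := by
      simp only [hqdef]
      exact fun h => hp ((map_eq_zero_iff _ (AlgEquiv.injective _)).mp h)
    have hcoef : q.coeff q.natDegree ≠ 0 := fun h => hq0 (Polynomial.leadingCoeff_eq_zero.mp h)
    have key : ∀ᵐ z : Fin n → ℝ,
        volume {y : ℝ | MvPolynomial.eval (Fin.cons y z) p = 0} = 0 := by
      filter_upwards [ih _ hcoef] with z hz
      have hqz : q.map (MvPolynomial.eval z) ≠ 0 := fun h => by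
        apply hz
        have := congrArg (fun r => Polynomial.coeff r q.natDegree) h
        simpa [Polynomial.coeff_map] using this
      have hfin : {y : ℝ | Polynomial.eval y (q.map (MvPolynomial.eval z)) = 0}.Finite :=
        Polynomial.finite_setOf_isRoot hqz
      refine measure_mono_null ?_ (hfin.measure_zero volume)
      intro y hy
      simp only [Set.mem_setOf_eq] at hy ⊢
      rwa [← MvPolynomial.eval_eq_eval_mv_eval']
    -- transfer to Fin (n+1) → ℝ
    rw [ae_iff]
    have hS : MeasurableSet {x : Fin (n+1) → ℝ | MvPolynomial.eval x p = 0} :=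
      (measurable_mv_eval p) (measurableSet_singleton 0)
    simp only [not_not]
    set S := {x : Fin (n+1) → ℝ | MvPolynomial.eval x p = 0}
    set e := MeasurableEquiv.piFinSuccAbove (fun _ : Fin (n+1) => ℝ) 0 with hedef
    have hmp : MeasurePreserving e.symm :=
      (volume_preserving_piFinSuccAbove (fun _ : Fin (n+1) => ℝ) 0).symm e
    have hcons : ∀ (y : ℝ) (z : Fin n → ℝ), e.symm (y, z) = Fin.cons y z := by
      intro y z
      funext j
      refine Fin.cases ?_ (fun j => ?_) j
      · simp [hedef, MeasurableEquiv.piFinSuccAbove]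
      · simp [hedef, MeasurableEquiv.piFinSuccAbove, Fin.succAbove_zero]
    have h1 : volume S = (volume : Measure (ℝ × (Fin n → ℝ))) (e.symm ⁻¹' S) := by
      rw [← hmp.map_eq, Measure.map_apply e.symm.measurable hS]
    rw [h1]
    have hT : MeasurableSet (e.symm ⁻¹' S) := e.symm.measurable hS
    rw [Measure.volume_eq_prod ℝ (Fin n → ℝ), ← Measure.prod_swap,
      Measure.map_apply measurable_swap hT, Measure.measure_prod_null (measurable_swap hT)]
    filter_upwards [key] with z hz
    have : (Prod.mk z ⁻¹' (Prod.swap ⁻¹' (e.symm ⁻¹' S)))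
        = {y : ℝ | MvPolynomial.eval (Fin.cons y z) p = 0} := by
      ext y
      simp [S, hcons y z]
    rw [this]
    exact hz

lemma ae_eval_ne_zero {ι : Type} [Fintype ι] (p : MvPolynomial ι ℝ) (hp : p ≠ 0) :
    ∀ᵐ x : ι → ℝ, MvPolynomial.eval x p ≠ 0 := by
  classical
  set f : Fin (Fintype.card ι) ≃ ι := (Fintype.equivFin ι).symm with hf
  set e := MeasurableEquiv.piCongrLeft (fun _ : ι => ℝ) f with hedef
  have hmp : MeasurePreserving e := volume_measurePreserving_piCongrLeft (fun _ : ι => ℝ) f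
  have happ : ∀ (y : Fin (Fintype.card ι) → ℝ), e y = fun i => y (f.symm i) := by
    intro y
    funext i
    conv_lhs => rw [← f.apply_symm_apply i]
    exact Equiv.piCongrLeft_apply_apply (fun _ : ι => ℝ) f y (f.symm i)
  have hq : MvPolynomial.rename f.symm p ≠ 0 :=
    fun h => hp (MvPolynomial.rename_injective _ f.symm.injective (by simpa using h))
  have hS : MeasurableSet {x : ι → ℝ | MvPolynomial.eval x p = 0} :=
    (measurable_mv_eval p) (measurableSet_singleton 0)
  rw [ae_iff]
  simp only [not_not]
  rw [← hmp.map_eq, Measure.map_apply e.measurable hS]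
  have h2 := ae_eval_ne_zero_fin _ _ hq
  rw [ae_iff] at h2
  simp only [not_not] at h2
  convert h2 using 2
  ext y
  simp only [Set.mem_preimage, Set.mem_setOf_eq, happ y, MvPolynomial.eval_rename]
  rfl

/-! ### Flattening the core space into a Euclidean space -/

variable {N : ℕ} (Idim Jdim : Fin N → ℕ) (R : Fin (N + 1) → ℕ)

abbrev FlatIdx : Type :=
  Σ k : Fin N, Fin (R k.castSucc) × Fin (Idim k) × Fin (Jdim k) × Fin (R k.succ)

def flatten (G : CoreSpace Idim Jdim R) : FlatIdx Idim Jdim R → ℝ :=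
  fun s => G s.1 s.2.1 s.2.2.1 s.2.2.2.1 s.2.2.2.2

set_option synthInstance.maxSize 2048 in
set_option synthInstance.maxHeartbeats 2000000 in
instance core_factor_sigmaFinite (k : Fin N) :
    SigmaFinite (volume : Measure
      (Fin (R k.castSucc) → Fin (Idim k) → Fin (Jdim k) → Fin (R k.succ) → ℝ)) :=
  inferInstance

lemma measurable_flatten : Measurable (flatten Idim Jdim R) := by
  refine measurable_pi_lambda _ fun s => ?_
  exact (measurable_pi_apply s.2.2.2.2).comp ((measurable_pi_apply s.2.2.2.1).comp
    ((measurable_pi_apply s.2.2.1).comp ((measurable_pi_apply s.2.1).comp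
      (measurable_pi_apply s.1))))

set_option synthInstance.maxHeartbeats 1000000 in
set_option maxHeartbeats 1000000 in
lemma measurePreserving_flatten :
    MeasurePreserving (flatten Idim Jdim R) volume volume := by
  refine ⟨measurable_flatten Idim Jdim R, ?_⟩
  rw [volume_pi]
  refine (Measure.pi_eq fun s hs => ?_).symm
  rw [Measure.map_apply (measurable_flatten Idim Jdim R) (MeasurableSet.univ_pi hs)]
  have hpre : flatten Idim Jdim R ⁻¹' Set.univ.pi s =
      Set.univ.pi fun k => Set.univ.pi fun a => Set.univ.pi fun i =>
        Set.univ.pi fun j => Set.univ.pi fun b => s ⟨k, a, i, j, b⟩ := by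
    ext G
    simp [flatten, Set.mem_univ_pi, Sigma.forall, Prod.forall]
  rw [hpre]
  rw [Measure.pi_pi]
  simp_rw [volume_pi_pi]
  rw [← Finset.univ_sigma_univ, Finset.prod_sigma]
  refine Finset.prod_congr rfl fun k _ => ?_
  rw [Fintype.prod_prod_type]
  refine Finset.prod_congr rfl fun a _ => ?_
  rw [Fintype.prod_prod_type]
  refine Finset.prod_congr rfl fun i _ => ?_
  rw [Fintype.prod_prod_type]

/-! ### Rank and minors -/

section RankMinor

open Matrix Module Submodule

variable {I J l m : Type*} [Fintype I] [Fintype J] [Fintype l] [Fintype m]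
  [DecidableEq I] [DecidableEq J] [DecidableEq l] [DecidableEq m]

lemma rank_submatrix_rows_le (A : Matrix I J ℝ) (f : l → I) :
    (A.submatrix f id).rank ≤ A.rank := by
  rw [Matrix.rank_eq_finrank_span_row, Matrix.rank_eq_finrank_span_row]
  apply Submodule.finrank_mono
  apply Submodule.span_mono
  rintro _ ⟨i, rfl⟩
  exact ⟨f i, rfl⟩

lemma rank_submatrix_le' (A : Matrix I J ℝ) (f : l → I) (g : m → J) :
    (A.submatrix f g).rank ≤ A.rank := by
  have h1 : A.submatrix f g = (A.submatrix f id).submatrix id g := by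
    rw [Matrix.submatrix_submatrix]; simp
  rw [h1]
  refine le_trans ?_ (rank_submatrix_rows_le A f)
  have h2 : ((A.submatrix f id).submatrix id g) = ((A.submatrix f id)ᵀ.submatrix g id)ᵀ := by
    simp [Matrix.transpose_submatrix]
  rw [h2, Matrix.rank_transpose, ← Matrix.rank_transpose (A.submatrix f id)]
  exact rank_submatrix_rows_le _ g

lemma exists_comp_linearIndependent {ι V : Type*} [Fintype ι] [AddCommGroup V] [Module ℝ V]
    (v : ι → V) (n : ℕ) (hn : n = finrank ℝ (span ℝ (Set.range v))) :
    ∃ f : Fin n → ι, LinearIndependent ℝ (v ∘ f) := by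
  classical
  obtain ⟨b, hbsub, hbspan, hbind⟩ := exists_linearIndependent ℝ (Set.range v)
  have hfin : b.Finite := (Set.finite_range v).subset hbsub
  haveI := hfin.fintype
  have hcard : Fintype.card b = n := by
    rw [hn, ← hbspan, finrank_span_set_eq_card hbind, Set.toFinset_card]
  set e : Fin n ≃ b := (Fintype.equivFinOfCardEq hcard).symm with he
  have hmem : ∀ i : Fin n, ((e i : V) ∈ Set.range v) := fun i => hbsub (e i).2
  choose f hf using fun i => hmem i
  refine ⟨f, ?_⟩
  have : v ∘ f = (fun x : b => (x : V)) ∘ e := by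
    funext i; simp [Function.comp, hf i]
  rw [this]
  exact hbind.comp e e.injective

lemma exists_det_submatrix_ne_zero (A : Matrix I J ℝ) (n : ℕ) (hn : A.rank = n) :
    ∃ (f : Fin n → I) (g : Fin n → J), (A.submatrix f g).det ≠ 0 := by
  classical
  obtain ⟨f, hf⟩ := exists_comp_linearIndependent (fun i => A i) n
    (by rw [← hn, Matrix.rank_eq_finrank_span_row]; rfl)
  set B : Matrix (Fin n) J ℝ := A.submatrix f id with hB
  have hBrows : LinearIndependent ℝ B := hf
  have hBrank : B.rank = n := by
    have := hBrows.rank_matrix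
    simp only [Fintype.card_fin] at this
    exact this
  obtain ⟨g, hg⟩ := exists_comp_linearIndependent (fun j => Bᵀ j) n
    (hBrank.symm.trans (by rw [← Matrix.rank_transpose, Matrix.rank_eq_finrank_span_row]; rfl))
  set C : Matrix (Fin n) (Fin n) ℝ := Bᵀ.submatrix g id with hC
  have hCrows : LinearIndependent ℝ C := hg
  have hCunit : IsUnit C := Matrix.linearIndependent_rows_iff_isUnit.mp hCrows
  have hCdet : C.det ≠ 0 := ((Matrix.isUnit_iff_isUnit_det C).mp hCunit).ne_zero
  refine ⟨f, g, ?_⟩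
  have : C = (A.submatrix f g)ᵀ := by
    rw [hC, hB, Matrix.transpose_submatrix, Matrix.submatrix_submatrix,
      Matrix.transpose_submatrix]
    simp
  rw [this, Matrix.det_transpose] at hCdet
  exact hCdet

lemma rank_eq_of_det_submatrix {n : ℕ} (A : Matrix I J ℝ) (f : Fin n → I) (g : Fin n → J)
    (h : (A.submatrix f g).det ≠ 0) (hn : n = min (Fintype.card I) (Fintype.card J)) :
    A.rank = min (Fintype.card I) (Fintype.card J) := by
  refine le_antisymm (le_min A.rank_le_card_height A.rank_le_card_width) ?_
  have h1 : (A.submatrix f g).rank = n := by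
    rw [Matrix.rank_of_isUnit _ ((Matrix.isUnit_iff_isUnit_det _).mpr h.isUnit)]
    simp
  calc min (Fintype.card I) (Fintype.card J) = n := hn.symm
    _ = (A.submatrix f g).rank := h1.symm
    _ ≤ A.rank := rank_submatrix_le' A f g

end RankMinor

/-! ### The entries of the TT matrix as polynomials -/

def ttPoly (eI : Fin (∏ k, Idim k) ≃ (∀ k, Fin (Idim k)))
    (eJ : Fin (∏ k, Jdim k) ≃ (∀ k, Fin (Jdim k)))
    (i : Fin (∏ k, Idim k)) (j : Fin (∏ k, Jdim k)) :
    MvPolynomial (FlatIdx Idim Jdim R) ℝ :=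
  ∑ r : ∀ k : Fin (N + 1), Fin (R k),
    ∏ k : Fin N, MvPolynomial.X ⟨k, (r k.castSucc, eI i k, eJ j k, r k.succ)⟩

lemma eval_ttPoly (eI : Fin (∏ k, Idim k) ≃ (∀ k, Fin (Idim k)))
    (eJ : Fin (∏ k, Jdim k) ≃ (∀ k, Fin (Jdim k)))
    (G : CoreSpace Idim Jdim R) (i : Fin (∏ k, Idim k)) (j : Fin (∏ k, Jdim k)) :
    MvPolynomial.eval (flatten Idim Jdim R G) (ttPoly Idim Jdim R eI eJ i j)
      = ttMatrix Idim Jdim R eI eJ G i j := by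
  simp [ttPoly, ttMatrix, flatten, map_sum, map_prod]

/-- if some tuple of TT-cores assembles to a matrix of rank `min I J`,
then almost every tuple of TT-cores assembles to a matrix of full rank `min I J`. -/
theorem tt_ae_full_rank {N : ℕ} (hN : 1 ≤ N) (Idim Jdim : Fin N → ℕ)
    (hI : ∀ k, 0 < Idim k) (hJ : ∀ k, 0 < Jdim k)
    (R : Fin (N + 1) → ℕ) (hR0 : R 0 = 1) (hRN : R (Fin.last N) = 1) (hRpos : ∀ k, 0 < R k)
    (eI : Fin (∏ k, Idim k) ≃ (∀ k, Fin (Idim k)))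
    (eJ : Fin (∏ k, Jdim k) ≃ (∀ k, Fin (Jdim k)))
    (hex : ∃ G₀ : CoreSpace Idim Jdim R,
      (ttMatrix Idim Jdim R eI eJ G₀).rank = min (∏ k, Idim k) (∏ k, Jdim k)) :
    ∀ᵐ G : CoreSpace Idim Jdim R,
      (ttMatrix Idim Jdim R eI eJ G).rank = min (∏ k, Idim k) (∏ k, Jdim k) := by
  classical
  obtain ⟨G₀, hG₀⟩ := hex
  set m := min (∏ k, Idim k) (∏ k, Jdim k) with hm
  -- the minor polynomials
  set Dp : (Fin m → Fin (∏ k, Idim k)) → (Fin m → Fin (∏ k, Jdim k)) →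
      MvPolynomial (FlatIdx Idim Jdim R) ℝ :=
    fun f g => (Matrix.of fun a b => ttPoly Idim Jdim R eI eJ (f a) (g b)).det with hDp
  have eval_Dp : ∀ (G : CoreSpace Idim Jdim R) f g,
      MvPolynomial.eval (flatten Idim Jdim R G) (Dp f g)
        = ((ttMatrix Idim Jdim R eI eJ G).submatrix f g).det := by
    intro G f g
    rw [hDp]
    rw [RingHom.map_det]
    congr 1
    ext a b
    simp [Matrix.map_apply, eval_ttPoly]
  set P : MvPolynomial (FlatIdx Idim Jdim R) ℝ :=
    ∑ f : Fin m → Fin (∏ k, Idim k), ∑ g : Fin m → Fin (∏ k, Jdim k), (Dp f g) ^ 2 with hP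
  have eval_P : ∀ G : CoreSpace Idim Jdim R,
      MvPolynomial.eval (flatten Idim Jdim R G) P
        = ∑ f : Fin m → Fin (∏ k, Idim k), ∑ g : Fin m → Fin (∏ k, Jdim k),
            (((ttMatrix Idim Jdim R eI eJ G).submatrix f g).det) ^ 2 := by
    intro G
    rw [hP, map_sum]
    refine Finset.sum_congr rfl fun f _ => ?_
    rw [map_sum]
    refine Finset.sum_congr rfl fun g _ => ?_
    rw [map_pow, eval_Dp]
  -- the polynomial P is nonzero
  have hP0 : P ≠ 0 := by
    obtain ⟨f₀, g₀, hdet⟩ := exists_det_submatrix_ne_zero (ttMatrix Idim Jdim R eI eJ G₀) m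
      (by rw [hG₀])
    intro h
    have h1 : MvPolynomial.eval (flatten Idim Jdim R G₀) P = 0 := by rw [h]; simp
    rw [eval_P] at h1
    have h2 : 0 < ∑ f : Fin m → Fin (∏ k, Idim k), ∑ g : Fin m → Fin (∏ k, Jdim k),
        (((ttMatrix Idim Jdim R eI eJ G₀).submatrix f g).det) ^ 2 := by
      refine Finset.sum_pos' (fun f _ => Finset.sum_nonneg fun g _ => sq_nonneg _)
        ⟨f₀, Finset.mem_univ _, Finset.sum_pos' (fun g _ => sq_nonneg _)
          ⟨g₀, Finset.mem_univ _, lt_of_le_of_ne (sq_nonneg _)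
            (Ne.symm (pow_ne_zero 2 hdet))⟩⟩
    rw [h1] at h2
    exact lt_irrefl 0 h2
  -- almost everywhere the evaluation is nonzero
  have hae : ∀ᵐ G : CoreSpace Idim Jdim R,
      MvPolynomial.eval (flatten Idim Jdim R G) P ≠ 0 := by
    have h1 := ae_eval_ne_zero P hP0
    have hmp := measurePreserving_flatten Idim Jdim R
    rw [← hmp.map_eq] at h1
    have hmeas : MeasurableSet {x : FlatIdx Idim Jdim R → ℝ | MvPolynomial.eval x P ≠ 0} :=
      ((measurable_mv_eval P) (measurableSet_singleton 0)).compl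
    exact (ae_map_iff hmp.measurable.aemeasurable hmeas).mp h1
  filter_upwards [hae] with G hG
  rw [eval_P] at hG
  have hminor : ∃ (f : Fin m → Fin (∏ k, Idim k)) (g : Fin m → Fin (∏ k, Jdim k)),
      (((ttMatrix Idim Jdim R eI eJ G).submatrix f g).det) ≠ 0 := by
    by_contra h
    push_neg at h
    apply hG
    refine Finset.sum_eq_zero fun f _ => Finset.sum_eq_zero fun g _ => ?_
    rw [h f g]
    ring
  obtain ⟨f, g, hdet⟩ := hminor
  have := rank_eq_of_det_submatrix (ttMatrix Idim Jdim R eI eJ G) f g hdet (by simp [hm])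
  simpa using this
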